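/- Let N = 2n+1 be odd and D the equispaced trigonometric differentiation matrix. The all-ones vector spans the kernel of D; that is, D v = 0 implies v is a constant multiple of (1,1,…,1). -/

import Mathlib

open Real

/-- The equispaced trigonometric differentiation matrix, as a complex matrix. -/
noncomputable def Dmat (N : ℕ) : Matrix (Fin N) (Fin N) ℂ := fun j k =>
  if j = k then 0
  else (-1 : ℂ) ^ (j.1 + k.1) / (2 * (Real.sin (π * ((j.1 : ℝ) - (k.1 : ℝ)) / N) : ℂ))

namespace DK
open Complex Finset

noncomputable def z (n : ℕ) : ℂ := Complex.exp (2 * π * I / (2 * n + 1))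

lemma hprim (n : ℕ) : IsPrimitiveRoot (z n) (2 * n + 1) := by
  have := Complex.isPrimitiveRoot_exp (2 * n + 1) (by omega)
  simpa [z] using this

lemma z_ne (n : ℕ) : z n ≠ 0 := (hprim n).ne_zero (by omega)

lemma zc (n : ℕ) {a b : ℤ} (h : ((2 * n + 1 : ℕ) : ℤ) ∣ (a - b)) : z n ^ a = z n ^ b := by
  have h1 : z n ^ (a - b) = 1 := ((hprim n).zpow_eq_one_iff_dvd _).mpr h
  calc z n ^ a = z n ^ (b + (a - b)) := by ring_nf
    _ = z n ^ b * z n ^ (a - b) := zpow_add₀ (z_ne n) _ _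
    _ = z n ^ b := by rw [h1, mul_one]

lemma zpow_ne_one (n : ℕ) {d : ℤ} (hd : ¬ ((2 * n + 1 : ℕ) : ℤ) ∣ d) : z n ^ d ≠ 1 := by
  intro h; exact hd (((hprim n).zpow_eq_one_iff_dvd _).mp h)

lemma Dentry (n : ℕ) (j k : Fin (2 * n + 1)) (hjk : j ≠ k) :
    Dmat (2 * n + 1) j k
      = I * z n ^ (((n : ℤ) + 1) * ((j.1 : ℤ) - k.1)) / (z n ^ ((j.1 : ℤ) - k.1) - 1) := by
  have hN : ((2 * n + 1 : ℕ) : ℂ) ≠ 0 := by exact_mod_cast (by omega : (2*n+1:ℕ) ≠ 0)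
  set d : ℤ := (j.1 : ℤ) - k.1 with hd
  have hd0 : d ≠ 0 := by
    have : j.1 ≠ k.1 := fun h => hjk (Fin.ext h)
    omega
  have hdlt : |d| < ((2 * n + 1 : ℕ) : ℤ) := by
    have h1 : j.1 < 2 * n + 1 := j.2
    have h2 : k.1 < 2 * n + 1 := k.2
    rw [abs_lt]; omega
  have hdvd : ¬ ((2 * n + 1 : ℕ) : ℤ) ∣ d := fun h => hd0 (Int.eq_zero_of_abs_lt_dvd h hdlt)
  set w : ℂ := Complex.exp (d * (π * I / (2 * n + 1))) with hw
  have hw0 : w ≠ 0 := Complex.exp_ne_zero _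
  have hwpow : ∀ m : ℤ, w ^ m = Complex.exp ((d * m) * (π * I / (2 * n + 1))) := by
    intro m
    rw [hw, ← Complex.exp_int_mul]
    ring_nf
  have hz_d : z n ^ d = w ^ (2 : ℤ) := by
    rw [hwpow, z, ← Complex.exp_int_mul]
    congr 1; push_cast; ring
  have hC : (2 * (n:ℂ) + 1) ≠ 0 := by
    have : ((2 * n + 1 : ℕ) : ℂ) = 2 * (n:ℂ) + 1 := by push_cast; ring
    rw [← this]; exact hN
  have hz_nd : z n ^ (((n : ℤ) + 1) * d) = w ^ ((2 * n + 1 : ℕ) : ℤ) * w := by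
    have h1 : w ^ ((2 * n + 1 : ℕ) : ℤ) * w = w ^ (((2 * n + 1 : ℕ) : ℤ) + 1) :=
      (zpow_add_one₀ hw0 _).symm
    rw [h1, hwpow, z, ← Complex.exp_int_mul]
    congr 1; push_cast; ring
  have hwN : w ^ ((2 * n + 1 : ℕ) : ℤ) = (-1 : ℂ) ^ d := by
    rw [hwpow, ← Complex.exp_pi_mul_I, ← Complex.exp_int_mul]
    congr 1
    field_simp
    push_cast; ring
  have hsgn : (-1 : ℂ) ^ (j.1 + k.1) = (-1 : ℂ) ^ d := by
    rw [← zpow_natCast (-1 : ℂ) (j.1 + k.1)]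
    have : ((j.1 + k.1 : ℕ) : ℤ) = d + 2 * k.1 := by push_cast; ring
    rw [this, zpow_add₀ (by norm_num : (-1:ℂ) ≠ 0), zpow_mul]
    norm_num
  have hxw : ((π * ((j.1 : ℝ) - (k.1 : ℝ)) / (2 * n + 1) : ℝ) : ℂ) * I
      = ↑d * (↑π * I / (2 * (n:ℂ) + 1)) := by rw [hd]; push_cast; ring
  have hsin : ((Real.sin (π * ((j.1 : ℝ) - (k.1 : ℝ)) / (2 * n + 1)) : ℝ) : ℂ)
      = (w⁻¹ - w) * I / 2 := by
    rw [Complex.ofReal_sin]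
    show (Complex.exp (-(((π * ((j.1 : ℝ) - (k.1 : ℝ)) / (2 * n + 1) : ℝ) : ℂ)) * I)
        - Complex.exp (((π * ((j.1 : ℝ) - (k.1 : ℝ)) / (2 * n + 1) : ℝ) : ℂ) * I)) * I / 2
      = (w⁻¹ - w) * I / 2
    rw [neg_mul, hxw, Complex.exp_neg, ← hw]
  have hw2 : w ^ (2:ℤ) - 1 ≠ 0 := by
    rw [← hz_d]; exact sub_ne_zero.mpr (zpow_ne_one n hdvd)
  have hsub : w⁻¹ - w ≠ 0 := by
    intro h
    apply hw2
    have h1 : w⁻¹ = w := by linear_combination h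
    have h2 : w ^ (2:ℤ) = 1 := by
      rw [zpow_two]
      nth_rewrite 2 [← h1]
      exact mul_inv_cancel₀ hw0
    rw [h2, sub_self]
  rw [show Dmat (2*n+1) j k = (-1 : ℂ) ^ (j.1 + k.1) / (2 * (Real.sin (π * ((j.1 : ℝ) - (k.1 : ℝ)) / (2*n+1)) : ℂ)) from by
    unfold Dmat; rw [if_neg hjk]; push_cast; ring_nf]
  rw [hsin, hsgn, hz_nd, hz_d, hwN]
  have hwinv : w⁻¹ = 1 / w := (one_div w).symm
  have h12 : (1:ℂ) - w ^ (2:ℤ) ≠ 0 := fun h => hw2 (by linear_combination -h)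
  rw [hwinv, zpow_two] at *
  have hden : (1 / w - w) * I ≠ 0 := by
    apply mul_ne_zero _ Complex.I_ne_zero
    intro h
    apply h12
    have : (1:ℂ) / w = w := by linear_combination h
    field_simp at this
    linear_combination this
  field_simp
  ring_nf
  simp only [Complex.I_sq]
  ring_nf
  rw [show (-1 + w ^ 2 : ℂ) = -(1 - w ^ 2) by ring, inv_neg, neg_neg]
noncomputable def S (n r : ℕ) : ℂ := ∑ m ∈ Finset.Ico 1 (2*n+1), z n ^ (m * r) / (z n ^ m - 1)

lemma pow_ne_one (n : ℕ) {m : ℕ} (h1 : ¬ (2*n+1) ∣ m) : z n ^ m ≠ 1 :=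
  fun h => h1 (((hprim n).pow_eq_one_iff_dvd m).mp h)

lemma not_dvd_of_lt (n : ℕ) {m : ℕ} (h1 : 0 < m) (h2 : m < 2*n+1) : ¬ (2*n+1) ∣ m :=
  fun h => absurd (Nat.le_of_dvd h1 h) (by omega)

lemma geom (n : ℕ) {r : ℕ} (hr : ¬ (2*n+1) ∣ r) :
    ∑ m ∈ Finset.Ico 1 (2*n+1), z n ^ (m * r) = -1 := by
  have h1 : z n ^ r ≠ 1 := pow_ne_one n hr
  have h2 : ∑ m ∈ Finset.range (2*n+1), (z n ^ r) ^ m = 0 := by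
    rw [geom_sum_eq h1, ← pow_mul, mul_comm r (2*n+1), pow_mul, (hprim n).pow_eq_one, one_pow,
      sub_self, zero_div]
  have h3 : ∑ m ∈ Finset.Ico 1 (2*n+1), z n ^ (m * r)
      = ∑ m ∈ Finset.Ico 1 (2*n+1), (z n ^ r) ^ m := by
    refine Finset.sum_congr rfl fun m _ => ?_
    rw [← pow_mul, mul_comm]
  rw [h3, Finset.sum_Ico_eq_sub _ (by omega), h2]
  simp

lemma S_zero (n : ℕ) : S n 0 = -(n : ℂ) := by
  have hS : S n 0 = ∑ m ∈ Finset.Ico 1 (2*n+1), 1 / (z n ^ m - 1) := by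
    refine Finset.sum_congr rfl fun m _ => ?_
    rw [Nat.mul_zero, pow_zero]
  have hS' : S n 0 = ∑ m ∈ Finset.Ico 1 (2*n+1), 1 / (z n ^ (2*n+1 - m) - 1) := by
    rw [hS]
    refine Finset.sum_nbij' (fun m => 2*n+1 - m) (fun m => 2*n+1 - m) ?_ ?_ ?_ ?_ ?_
    all_goals (intro a ha; simp only [Finset.mem_Ico] at *)
    · omega
    · omega
    · omega
    · omega
    · rw [show 2*n+1 - (2*n+1 - a) = a from by omega]
  have key : ∀ m ∈ Finset.Ico 1 (2*n+1),
      1 / (z n ^ m - 1) + 1 / (z n ^ (2*n+1 - m) - 1) = -1 := by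
    intro m hm
    simp only [Finset.mem_Ico] at hm
    have hu : z n ^ m ≠ 1 := pow_ne_one n (not_dvd_of_lt n hm.1 hm.2)
    have hv : z n ^ (2*n+1-m) ≠ 1 := pow_ne_one n (not_dvd_of_lt n (by omega) (by omega))
    have huv : z n ^ m * z n ^ (2*n+1-m) = 1 := by
      rw [← pow_add, show m + (2*n+1-m) = 2*n+1 by omega, (hprim n).pow_eq_one]
    have hu' := sub_ne_zero.mpr hu
    have hv' := sub_ne_zero.mpr hv
    field_simp
    linear_combination huv
  have h2 : S n 0 + S n 0 = -(2*(n:ℂ)) := by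
    nth_rewrite 1 [hS]
    nth_rewrite 1 [hS']
    rw [← Finset.sum_add_distrib]
    rw [Finset.sum_congr rfl key]
    simp only [Finset.sum_const, Nat.card_Ico, nsmul_eq_mul]
    push_cast
    ring
  linear_combination h2 / 2

lemma S_step (n : ℕ) (r : ℕ) :
    S n (r + 1) = S n r + ∑ m ∈ Finset.Ico 1 (2*n+1), z n ^ (m * r) := by
  rw [S, S, ← Finset.sum_add_distrib]
  refine Finset.sum_congr rfl fun m hm => ?_
  simp only [Finset.mem_Ico] at hm
  have hu : z n ^ m ≠ 1 := pow_ne_one n (not_dvd_of_lt n hm.1 hm.2)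
  have hu' := sub_ne_zero.mpr hu
  have : z n ^ (m * (r+1)) = z n ^ (m * r) * z n ^ m := by rw [← pow_add]; ring_nf
  rw [this]
  field_simp
  ring

lemma S_val (n : ℕ) {r : ℕ} (h1 : 1 ≤ r) (h2 : r ≤ 2*n+1) : S n r = (n : ℂ) + 1 - r := by
  induction r, h1 using Nat.le_induction with
  | base =>
    rw [S_step n 0, S_zero]
    have : ∑ m ∈ Finset.Ico 1 (2*n+1), z n ^ (m * 0) = 2*n := by
      simp
    rw [this]; push_cast; ring
  | succ r hr ih =>
    rw [S_step n r, ih (by omega), geom n (not_dvd_of_lt n (by omega) (by omega))]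
    push_cast; ring

def rk (n : ℕ) (k : Fin (2*n+1)) : ℕ := if k.1 ≤ n then n + 1 - k.1 else 3*n+2 - k.1

lemma rk_spec (n : ℕ) (k : Fin (2*n+1)) :
    ((2*n+1:ℕ):ℤ) ∣ ((n:ℤ) + 1 - k.1 - rk n k) := by
  have hk := k.2
  unfold rk
  split_ifs with h
  · refine ⟨0, ?_⟩; push_cast [Nat.cast_sub (by omega : k.1 ≤ n + 1)]; ring
  · refine ⟨-1, ?_⟩
    push_cast [Nat.cast_sub (by omega : k.1 ≤ 3*n+2)]
    ring

lemma rk_ge (n : ℕ) (k : Fin (2*n+1)) : 1 ≤ rk n k := by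
  have hk := k.2; unfold rk; split_ifs with h <;> omega

lemma rk_le (n : ℕ) (k : Fin (2*n+1)) : rk n k ≤ 2*n+1 := by
  have hk := k.2; unfold rk; split_ifs with h <;> omega

lemma rk_ne (n : ℕ) (k : Fin (2*n+1)) (hk : k ≠ 0) : rk n k ≠ n + 1 := by
  have hk2 := k.2
  have hv : k.1 ≠ 0 := by
    intro h0
    exact hk (Fin.ext (by rw [h0]; rfl))
  unfold rk; split_ifs with h <;> omega

lemma S_rk_ne (n : ℕ) (k : Fin (2*n+1)) (hk : k ≠ 0) : S n (rk n k) ≠ 0 := by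
  rw [S_val n (rk_ge n k) (rk_le n k)]
  intro h
  have h2 : (((n:ℤ) + 1 - (rk n k : ℤ) : ℤ) : ℂ) = 0 := by push_cast; linear_combination h
  have h3 : ((n:ℤ) + 1 - (rk n k : ℤ)) = 0 := by exact_mod_cast h2
  have := rk_ne n k hk
  omega

lemma zpn (n : ℕ) (a : ℕ) : z n ^ a = z n ^ (a : ℤ) := (zpow_natCast _ _).symm

lemma sum_shift (n : ℕ) (G : ℕ → ℂ) :
    ∑ d ∈ (Finset.univ.erase (0 : Fin (2*n+1))), G d.1
      = ∑ m ∈ Finset.Ico 1 (2*n+1), G m := by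
  refine Finset.sum_nbij' (fun d => d.1)
    (fun m => (⟨m % (2*n+1), Nat.mod_lt _ (by omega)⟩ : Fin (2*n+1))) ?_ ?_ ?_ ?_ ?_
  · intro a ha
    have h0 : a.1 ≠ 0 := by
      intro h
      exact (Finset.mem_erase.mp ha).1 (Fin.ext (by rw [h]; rfl))
    have h2 := a.2
    simp only [Finset.mem_Ico]
    omega
  · intro a ha
    have ha' := Finset.mem_Ico.mp ha
    refine Finset.mem_erase.mpr ⟨?_, Finset.mem_univ _⟩
    intro h
    have : a % (2*n+1) = 0 := by
      have := congrArg Fin.val h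
      simpa using this
    rw [Nat.mod_eq_of_lt ha'.2] at this
    omega
  · intro a _
    exact Fin.ext (by simp [Nat.mod_eq_of_lt a.2])
  · intro a ha
    have ha' := Finset.mem_Ico.mp ha
    simp [Nat.mod_eq_of_lt ha'.2]
  · intro a _
    rfl

lemma sub_val_congr (n : ℕ) (j d : Fin (2*n+1)) :
    ((2*n+1:ℕ):ℤ) ∣ ((j.1:ℤ) - d.1 - ((j - d : Fin (2*n+1)).1 : ℤ)) := by
  have hsub : (j - d).1 = (2*n+1 - d.1 + j.1) % (2*n+1) := by rw [Fin.sub_def]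
  have hq := Nat.div_add_mod (2*n+1 - d.1 + j.1) (2*n+1)
  rw [← hsub] at hq
  have hd2 : d.1 ≤ 2*n+1 := le_of_lt d.2
  have hqZ : ((2*n+1:ℕ):ℤ) * (((2*n+1 - d.1 + j.1) / (2*n+1) : ℕ) : ℤ) + ((j-d).1 : ℤ)
      = ((2*n+1 : ℕ):ℤ) - d.1 + j.1 := by
    push_cast [Nat.cast_sub hd2] at hq ⊢
    exact_mod_cast hq
  exact ⟨(((2*n+1 - d.1 + j.1) / (2*n+1) : ℕ) : ℤ) - 1, by linear_combination -hqZ⟩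

lemma point (n : ℕ) (j k d : Fin (2*n+1)) (hd : d ≠ 0) :
    Dmat (2*n+1) j (j - d) * z n ^ ((j - d).1 * k.1)
      = (I * z n ^ (j.1 * k.1)) * (z n ^ ((d.1:ℤ) * rk n k) / (z n ^ (d.1:ℤ) - 1)) := by
  have hne : j ≠ j - d := fun h => hd (sub_eq_self.mp h.symm)
  rw [Dentry n j (j - d) hne]
  set m := j - d with hm
  have hkey := sub_val_congr n j d
  have e1 : z n ^ (((n:ℤ)+1) * ((j.1:ℤ) - m.1)) = z n ^ (((n:ℤ)+1) * (d.1:ℤ)) := by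
    refine zc n ?_
    have h2 : ((n:ℤ)+1) * ((j.1:ℤ) - m.1) - ((n:ℤ)+1) * (d.1:ℤ)
        = ((n:ℤ)+1) * ((j.1:ℤ) - d.1 - m.1) := by ring
    rw [h2]; exact hkey.mul_left _
  have e2 : z n ^ ((j.1:ℤ) - (m.1:ℤ)) = z n ^ ((d.1:ℤ)) := by
    refine zc n ?_
    have h2 : (j.1:ℤ) - m.1 - d.1 = (j.1:ℤ) - d.1 - m.1 := by ring
    rw [h2]; exact hkey
  have e3 : z n ^ (m.1 * k.1) = z n ^ (((j.1:ℤ) - d.1) * k.1) := by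
    rw [zpn]
    refine zc n ?_
    have h2 : ((m.1 * k.1 : ℕ) : ℤ) - ((j.1:ℤ) - d.1) * k.1
        = -(((j.1:ℤ) - d.1 - m.1) * k.1) := by push_cast; ring
    rw [h2]
    exact dvd_neg.mpr (hkey.mul_right _)
  have e4 : z n ^ (j.1 * k.1) = z n ^ ((j.1:ℤ) * (k.1:ℤ)) := by
    rw [zpn]; norm_cast
  have e5 : z n ^ (((n:ℤ)+1) * (d.1:ℤ)) * z n ^ (((j.1:ℤ) - d.1) * (k.1:ℤ))
      = z n ^ ((d.1:ℤ) * (rk n k : ℤ)) * z n ^ ((j.1:ℤ) * (k.1:ℤ)) := by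
    rw [← zpow_add₀ (z_ne n), ← zpow_add₀ (z_ne n)]
    refine zc n ?_
    have h2 : (((n:ℤ)+1) * (d.1:ℤ) + ((j.1:ℤ) - d.1) * (k.1:ℤ))
        - ((d.1:ℤ) * (rk n k : ℤ) + (j.1:ℤ) * (k.1:ℤ))
        = (d.1:ℤ) * ((n:ℤ) + 1 - k.1 - rk n k) := by ring
    rw [h2]; exact (rk_spec n k).mul_left _
  rw [e1, e2, e3, e4]
  calc I * z n ^ (((n:ℤ)+1) * (d.1:ℤ)) / (z n ^ ((d.1:ℤ)) - 1) * z n ^ (((j.1:ℤ) - d.1) * (k.1:ℤ))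
      = I * (z n ^ (((n:ℤ)+1) * (d.1:ℤ)) * z n ^ (((j.1:ℤ) - d.1) * (k.1:ℤ))) / (z n ^ ((d.1:ℤ)) - 1) := by
        ring
    _ = I * (z n ^ ((d.1:ℤ) * (rk n k : ℤ)) * z n ^ ((j.1:ℤ) * (k.1:ℤ))) / (z n ^ ((d.1:ℤ)) - 1) := by
        rw [e5]
    _ = (I * z n ^ ((j.1:ℤ) * (k.1:ℤ))) * (z n ^ ((d.1:ℤ) * (rk n k : ℤ)) / (z n ^ ((d.1:ℤ)) - 1)) := by
        ring

lemma eigen (n : ℕ) (j k : Fin (2*n+1)) :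
    ∑ m : Fin (2*n+1), Dmat (2*n+1) j m * z n ^ (m.1 * k.1)
      = I * S n (rk n k) * z n ^ (j.1 * k.1) := by
  have h1 : ∑ m : Fin (2*n+1), Dmat (2*n+1) j m * z n ^ (m.1 * k.1)
      = ∑ d : Fin (2*n+1), Dmat (2*n+1) j (j - d) * z n ^ ((j - d).1 * k.1) :=
    (Fintype.sum_equiv (Equiv.subLeft j)
      (fun d => Dmat (2*n+1) j (j - d) * z n ^ ((j - d).1 * k.1))
      (fun m => Dmat (2*n+1) j m * z n ^ (m.1 * k.1)) (fun d => rfl)).symm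
  rw [h1, ← Finset.sum_erase_add _ _ (Finset.mem_univ (0 : Fin (2*n+1)))]
  have h0 : Dmat (2*n+1) j (j - 0) * z n ^ ((j - 0 : Fin (2*n+1)).1 * k.1) = 0 := by
    rw [sub_zero]
    unfold Dmat
    rw [if_pos rfl, zero_mul]
  rw [h0, add_zero]
  rw [Finset.sum_congr rfl (fun d hd => point n j k d (Finset.mem_erase.mp hd).1)]
  rw [← Finset.mul_sum]
  rw [sum_shift n (fun m => z n ^ ((m:ℤ) * rk n k) / (z n ^ (m:ℤ) - 1))]
  have hsum : ∑ m ∈ Finset.Ico 1 (2*n+1), z n ^ ((m:ℤ) * rk n k) / (z n ^ (m:ℤ) - 1)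
      = S n (rk n k) := by
    refine Finset.sum_congr rfl fun m _ => ?_
    rw [zpn n (m * rk n k), zpn n m]
    push_cast
    ring_nf
  rw [hsum]
  ring

lemma Dskew (N : ℕ) (j m : Fin N) : Dmat N j m = - Dmat N m j := by
  unfold Dmat
  rcases eq_or_ne j m with h | h
  · simp [h]
  · rw [if_neg h, if_neg (Ne.symm h)]
    have h1 : (π * ((m.1:ℝ) - (j.1:ℝ)) / N) = -(π * ((j.1:ℝ) - (m.1:ℝ)) / N) := by ring
    rw [h1, Real.sin_neg, Nat.add_comm m.1 j.1]
    push_cast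
    ring

end DK


theorem Dmat_kernel (n : ℕ) (v : Fin (2 * n + 1) → ℂ)
    (hv : (Dmat (2 * n + 1)).mulVec v = 0) :
    ∃ c : ℂ, v = fun _ => c := by
  classical
  have hF : ∀ k : Fin (2*n+1), k ≠ 0 →
      ∑ m : Fin (2*n+1), v m * DK.z n ^ (m.1 * k.1) = 0 := by
    intro k hk
    have h0 : ∑ j : Fin (2*n+1), DK.z n ^ (j.1 * k.1) * (Dmat (2*n+1)).mulVec v j = 0 := by
      rw [hv]; simp
    have h1 : ∀ j : Fin (2*n+1), (Dmat (2*n+1)).mulVec v j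
        = ∑ m : Fin (2*n+1), Dmat (2*n+1) j m * v m := fun j => rfl
    rw [Finset.sum_congr rfl (fun j _ => by rw [h1 j, Finset.mul_sum])] at h0
    rw [Finset.sum_comm] at h0
    have h2 : ∀ m : Fin (2*n+1),
        ∑ j : Fin (2*n+1), DK.z n ^ (j.1 * k.1) * (Dmat (2*n+1) j m * v m)
        = -(Complex.I * DK.S n (DK.rk n k)) * (v m * DK.z n ^ (m.1 * k.1)) := by
      intro m
      have h3 : ∀ j : Fin (2*n+1), DK.z n ^ (j.1*k.1) * (Dmat (2*n+1) j m * v m)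
          = -(Dmat (2*n+1) m j * DK.z n ^ (j.1*k.1)) * v m := by
        intro j; rw [DK.Dskew (2*n+1) j m]; ring
      rw [Finset.sum_congr rfl (fun j _ => h3 j)]
      have h4 : ∑ j : Fin (2*n+1), -(Dmat (2*n+1) m j * DK.z n ^ (j.1*k.1)) * v m
          = -(∑ j : Fin (2*n+1), Dmat (2*n+1) m j * DK.z n ^ (j.1*k.1)) * v m := by
        rw [← Finset.sum_mul, Finset.sum_neg_distrib]
      rw [h4, DK.eigen n m k]; ring
    rw [Finset.sum_congr rfl (fun m _ => h2 m), ← Finset.mul_sum] at h0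
    have hne : -(Complex.I * DK.S n (DK.rk n k)) ≠ 0 := by
      simp only [neg_ne_zero]
      exact mul_ne_zero Complex.I_ne_zero (DK.S_rk_ne n k hk)
    exact (mul_eq_zero.mp h0).resolve_left hne
  have key : ∀ t : Fin (2*n+1), ((2*n+1 : ℕ):ℂ) * v t = ∑ m : Fin (2*n+1), v m := by
    intro t
    have hgeo : ∀ m : Fin (2*n+1),
        ∑ k : Fin (2*n+1), DK.z n ^ ((m.1 + (2*n+1 - t.1)) * k.1)
        = if m = t then ((2*n+1:ℕ):ℂ) else 0 := by
      intro m
      rw [Fin.sum_univ_eq_sum_range (fun k => DK.z n ^ ((m.1 + (2*n+1 - t.1)) * k))]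
      by_cases hmt : m = t
      · subst hmt
        rw [if_pos rfl]
        have he : m.1 + (2*n+1 - m.1) = 2*n+1 := by have := m.2; omega
        rw [he]
        have : ∀ kk : ℕ, DK.z n ^ ((2*n+1) * kk) = 1 := by
          intro kk; rw [pow_mul, (DK.hprim n).pow_eq_one, one_pow]
        rw [Finset.sum_congr rfl (fun kk _ => this kk)]
        simp
      · rw [if_neg hmt]
        have ha : ¬ (2*n+1) ∣ (m.1 + (2*n+1 - t.1)) := by
          intro hdvd
          have h1 := m.2; have h2 := t.2
          have hmt' : m.1 ≠ t.1 := fun h => hmt (Fin.ext h)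
          obtain ⟨c, hc⟩ := hdvd
          rcases c with _ | _ | c <;> simp [Nat.mul_succ] at hc <;> omega
        have h1 : DK.z n ^ (m.1 + (2*n+1 - t.1)) ≠ 1 := DK.pow_ne_one n ha
        calc ∑ kk ∈ Finset.range (2*n+1), DK.z n ^ ((m.1 + (2*n+1 - t.1)) * kk)
            = ∑ kk ∈ Finset.range (2*n+1), (DK.z n ^ (m.1 + (2*n+1 - t.1))) ^ kk := by
              refine Finset.sum_congr rfl fun kk _ => by rw [← pow_mul]
          _ = 0 := by
              rw [geom_sum_eq h1, ← pow_mul, mul_comm (m.1 + (2*n+1 - t.1)), pow_mul,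
                (DK.hprim n).pow_eq_one, one_pow, sub_self, zero_div]
    have hL : ∑ k : Fin (2*n+1),
        (∑ m : Fin (2*n+1), v m * DK.z n ^ (m.1 * k.1)) * DK.z n ^ ((2*n+1 - t.1) * k.1)
        = ∑ m : Fin (2*n+1), v m := by
      rw [Finset.sum_eq_single (0 : Fin (2*n+1))]
      · have hz0 : ((0 : Fin (2*n+1)).1 : ℕ) = 0 := rfl
        simp [hz0]
      · intro k _ hk; rw [hF k hk, zero_mul]
      · intro h; exact absurd (Finset.mem_univ _) h
    have hR : ∑ k : Fin (2*n+1),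
        (∑ m : Fin (2*n+1), v m * DK.z n ^ (m.1 * k.1)) * DK.z n ^ ((2*n+1 - t.1) * k.1)
        = ((2*n+1:ℕ):ℂ) * v t := by
      calc ∑ k : Fin (2*n+1),
          (∑ m : Fin (2*n+1), v m * DK.z n ^ (m.1 * k.1)) * DK.z n ^ ((2*n+1 - t.1) * k.1)
          = ∑ k : Fin (2*n+1), ∑ m : Fin (2*n+1),
              v m * DK.z n ^ ((m.1 + (2*n+1 - t.1)) * k.1) := by
            refine Finset.sum_congr rfl fun k _ => ?_
            rw [Finset.sum_mul]
            refine Finset.sum_congr rfl fun m _ => ?_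
            rw [add_mul, pow_add]; ring
        _ = ∑ m : Fin (2*n+1), ∑ k : Fin (2*n+1),
              v m * DK.z n ^ ((m.1 + (2*n+1 - t.1)) * k.1) := Finset.sum_comm
        _ = ∑ m : Fin (2*n+1), v m * (if m = t then ((2*n+1:ℕ):ℂ) else 0) := by
            refine Finset.sum_congr rfl fun m _ => ?_
            rw [← hgeo m, Finset.mul_sum]
        _ = ((2*n+1:ℕ):ℂ) * v t := by
            rw [Finset.sum_congr rfl (fun m _ => by rw [mul_ite, mul_zero] :
              ∀ m ∈ Finset.univ, v m * (if m = t then ((2*n+1:ℕ):ℂ) else 0)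
                = if m = t then v m * ((2*n+1:ℕ):ℂ) else 0)]
            rw [Finset.sum_ite_eq' Finset.univ t (fun m => v m * ((2*n+1:ℕ):ℂ))]
            rw [if_pos (Finset.mem_univ t)]
            ring
    rw [← hL, hR]
  have hNne : ((2*n+1 : ℕ):ℂ) ≠ 0 := by
    exact_mod_cast (by omega : (2*n+1:ℕ) ≠ 0)
  refine ⟨(∑ m : Fin (2*n+1), v m) / ((2*n+1:ℕ):ℂ), funext fun t => ?_⟩
  rw [eq_div_iff hNne, mul_comm, key t]
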